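/- Assume (F0), (F1) and (F2), and assume f₀'(x) ≤ β⁺ and f₂'(x) ≤ β⁺ for all x∈[0,1]. If γ·(β⁺)² < 1, then there is exactly one G-invariant Borel probability measure μ with π⁎μ equal to the (1/3,1/3,1/3)-Bernoulli measure on Σ₃, and this μ satisfies χ(μ) < 0. -/

import Mathlib

open Set Filter MeasureTheory

noncomputable section

/-- Condition (F0) on the fiber map `f₀`. -/
def F0cond (f₀ : ℝ → ℝ) (β₀ lam₀ : ℝ) : Prop :=
  ContDiff ℝ 1 f₀ ∧ Set.MapsTo f₀ (Set.Icc 0 1) (Set.Icc 0 1) ∧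
  StrictMonoOn f₀ (Set.Icc 0 1) ∧ f₀ 0 = 0 ∧ f₀ 1 = 1 ∧
  (∀ x ∈ Set.Ioo (0:ℝ) 1, x < f₀ x) ∧
  deriv f₀ 0 = β₀ ∧ 1 < β₀ ∧ deriv f₀ 1 = lam₀ ∧ 0 < lam₀ ∧ lam₀ < 1 ∧
  (∀ x ∈ Set.Icc (0:ℝ) 1, lam₀ ≤ deriv f₀ x)

/-- Condition (F1) on the fiber map `f₁`. -/
def F1cond (f₁ : ℝ → ℝ) (γ lam₀ : ℝ) : Prop :=
  (∀ x, f₁ x = γ * (1 - x)) ∧ lam₀ ≤ γ ∧ γ < 1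

/-- Condition (F2) on the fiber map `f₂`. -/
def F2cond (f₂ : ℝ → ℝ) (β₂ lam₀ : ℝ) : Prop :=
  ContDiff ℝ 1 f₂ ∧ Set.MapsTo f₂ (Set.Icc 0 1) (Set.Icc 0 1) ∧
  StrictMonoOn f₂ (Set.Icc 0 1) ∧ f₂ 0 = 0 ∧
  deriv f₂ 0 = β₂ ∧ 1 < β₂ ∧ (∀ x ∈ Set.Icc (0:ℝ) 1, lam₀ ≤ deriv f₂ x) ∧
  ∃ p₂, p₂ ∈ Set.Ioo (0:ℝ) 1 ∧ f₂ p₂ = p₂ ∧ (∀ x ∈ Set.Ioo 0 p₂, x < f₂ x) ∧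
    (∀ x ∈ Set.Ioc p₂ 1, f₂ x < x)

/-- Condition (F01). -/
def F01cond (f₀ : ℝ → ℝ) (β₀ lam₀ γ : ℝ) : Prop :=
  AntitoneOn (deriv f₀) (Set.Icc 0 1) ∧
  1 < γ * (lam₀ ^ 3 * (1 - lam₀) / (1 - β₀⁻¹))

/-- Condition (F012), with `H = [0,δ]`, `H' = [1-γ⁻¹δ,1]`, and the derived constants
`β' = βpr`, `β_H = βH`, `λ' = lampr`, `L`. -/
def F012cond (f₀ f₁ f₂ : ℝ → ℝ) (γ lam₀ β₀ β₂ δ βpr βH lampr : ℝ) (L : ℕ) : Prop :=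
  (∀ x ∈ Set.Icc (0:ℝ) 1, deriv f₀ x ≤ max β₀ β₂ ∧ deriv f₂ x ≤ max β₀ β₂) ∧
  0 < δ ∧ δ < γ ∧
  (f₁ '' Set.Icc 0 δ) ∩ Set.Icc 0 δ = ∅ ∧
  (f₁ '' Set.Icc (1 - γ⁻¹ * δ) 1) ∩ Set.Icc (1 - γ⁻¹ * δ) 1 = ∅ ∧
  (f₁ '' Set.Icc 0 1) ∩ Set.Icc (1 - γ⁻¹ * δ) 1 = ∅ ∧
  (f₂ '' Set.Icc 0 1) ∩ Set.Icc (1 - γ⁻¹ * δ) 1 = ∅ ∧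
  IsGreatest {y | ∃ x ∈ Set.Icc δ 1, y = max (deriv f₀ x) (deriv f₂ x)} βpr ∧
  1 < βpr ∧ βpr < min β₀ β₂ ∧
  IsLeast {y | ∃ x ∈ Set.Icc (0:ℝ) δ, y = min (deriv f₀ x) (deriv f₂ x)} βH ∧
  1 < βH ∧ βH < min β₀ β₂ ∧
  IsGreatest {y | ∃ x ∈ Set.Icc (1 - γ⁻¹ * δ) 1, y = deriv f₀ x} lampr ∧
  lampr < 1 ∧
  |Real.log lam₀| * Real.log (max β₀ β₂) / Real.log βH - |Real.log lampr|
      + (2 / 3) * Real.log (max β₀ β₂) < (3 / 4) * Real.log βpr ∧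
  1 ≤ L ∧
  4 * |Real.log lam₀| * Real.log (max β₀ β₂) / (Real.log βH * Real.log βpr) < (L : ℝ) ∧
  Real.log ((max β₀ β₂) ^ L * γ) / ((L : ℝ) + 1) < Real.log βpr

/-- `f_{ξ_{n-1}} ∘ ⋯ ∘ f_{ξ₀}`. -/
def seqComp (fs : Fin 3 → ℝ → ℝ) (ξ : ℕ → Fin 3) : ℕ → ℝ → ℝ
  | 0 => id
  | n + 1 => fun x => fs (ξ n) (seqComp fs ξ n x)

/-- The upper Lyapunov exponent of the point `p` under the itinerary `ξ`. -/
def lyapUpper (fs : Fin 3 → ℝ → ℝ) (p : ℝ) (ξ : ℕ → Fin 3) : ℝ :=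
  Filter.limsup (fun n : ℕ => (1 / (n : ℝ)) * Real.log |deriv (seqComp fs ξ n) p|) Filter.atTop

/-- Membership in the exceptional set `E`. -/
def exceptional (fs : Fin 3 → ℝ → ℝ) (p : ℝ) (ξ : ℕ → Fin 3) : Prop :=
  ∃ m : ℕ, seqComp fs ξ m p = 0 ∧ ∀ j, m ≤ j → (ξ j = 0 ∨ ξ j = 2)

/-- `f_[w] = f_{w_{m-1}} ∘ ⋯ ∘ f_{w₀}` for a finite word `w`. -/
def wordComp {α : Type*} (fs : α → ℝ → ℝ) (w : List α) : ℝ → ℝ :=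
  fun x => w.foldl (fun y i => fs i y) x

/-- The two-sided sequence space `Σ₃`. -/
abbrev Sig3 := ℤ → Fin 3

/-- The state space `Σ₃ × [0,1]`. -/
abbrev XSp := Sig3 × (Set.Icc (0:ℝ) 1)

instance : UniformSpace (Fin 3) := ⊥

/-- The left shift on `Σ₃`. -/
def shiftMap (ξ : Sig3) : Sig3 := fun i => ξ (i + 1)

/-- The step skew product `G(ξ,x) = (σξ, f_{ξ₀}(x))` on `Σ₃ × [0,1]`. -/
def Gmap (fs : Fin 3 → ℝ → ℝ) : XSp → XSp :=
  fun p => (shiftMap p.1, Set.projIcc 0 1 (by norm_num) (fs (p.1 0) (p.2 : ℝ)))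

/-- The maximal invariant set `Λ_G = ⋂ₙ Gⁿ(Σ₃ × [0,1])`. -/
def LamG (fs : Fin 3 → ℝ → ℝ) : Set XSp := ⋂ n : ℕ, (Gmap fs)^[n] '' Set.univ

/-- The lateral horseshoe `Λ₀₂`. -/
def Lam02 : Set XSp := {p | (∀ i, p.1 i ≠ 1) ∧ (p.2 : ℝ) = 0}

/-- The central derivative potential `φ(ξ,x) = log|f_{ξ₀}'(x)|`. -/
def phiC (fs : Fin 3 → ℝ → ℝ) (p : XSp) : ℝ := Real.log |deriv (fs (p.1 0)) (p.2 : ℝ)|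

/-- The central Lyapunov exponent `χ(μ) = ∫ φ dμ` of a measure. -/
def chiOf (fs : Fin 3 → ℝ → ℝ) (μ : Measure XSp) : ℝ := ∫ p, phiC fs p ∂μ

/-- `ν` is the `(p 0, p 1, p 2)`-Bernoulli measure on `Σ₃`. -/
def IsBernoulli (p : Fin 3 → ℝ) (ν : Measure Sig3) : Prop :=
  IsProbabilityMeasure ν ∧ ∀ (s : Finset ℤ) (a : ℤ → Fin 3),
    ν {ξ | ∀ i ∈ s, ξ i = a i} = ENNReal.ofReal (∏ i ∈ s, p (a i))



open TopologicalSpace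
open scoped ENNReal

/-- one-point cylinders -/

def bCyl (s : Finset ℤ) (a : ℤ → Fin 3) : Set Sig3 := {ξ | ∀ i ∈ s, ξ i = a i}

lemma bCyl_meas (s : Finset ℤ) (a : ℤ → Fin 3) : MeasurableSet (bCyl s a) := by
  have : bCyl s a = ⋂ i ∈ s, (fun ξ : Sig3 => ξ i) ⁻¹' {a i} := by
    ext ξ; simp [bCyl]
  rw [this]
  exact MeasurableSet.biInter s.countable_toSet fun i _ =>
    (measurable_pi_apply i) (measurableSet_singleton _)

def nuB : Measure Sig3 := Measure.addHaarMeasure ⊤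

instance : nuB.IsAddLeftInvariant := by unfold nuB; infer_instance

instance : IsProbabilityMeasure nuB := by
  constructor
  have := Measure.addHaarMeasure_self (K₀ := (⊤ : PositiveCompacts Sig3))
  simpa [nuB, PositiveCompacts.coe_top] using this

lemma nuB_bCyl (s : Finset ℤ) (a : ℤ → Fin 3) :
    nuB (bCyl s a) = (3 : ℝ≥0∞)⁻¹ ^ s.card := by
  classical
  induction s using Finset.induction generalizing a with
  | empty =>
      simp only [bCyl, Finset.notMem_empty, false_implies, implies_true, setOf_true,
        Finset.card_empty, pow_zero]
      exact measure_univ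
  | @insert j s hj ih =>
      -- all values at j give equal measure
      have key : ∀ v w : Fin 3,
          nuB (bCyl (insert j s) (Function.update a j v))
            = nuB (bCyl (insert j s) (Function.update a j w)) := by
        intro v w
        have hinv := measure_preimage_add nuB (Pi.single j (v - w))
          (bCyl (insert j s) (Function.update a j v))
        rw [← hinv]
        congr 1
        ext ξ
        simp only [bCyl, mem_preimage, mem_setOf_eq, Pi.add_apply]
        constructor
        · intro h i hi
          rcases Finset.mem_insert.1 hi with rfl | his
          · have h' := h i hi
            simp only [Pi.single_eq_same, Function.update_self] at h' ⊢
            have : (v - w) + ξ i = (v - w) + w := by rw [h', sub_add_cancel]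
            exact add_left_cancel this
          · have h' := h i hi
            have hij : i ≠ j := by rintro rfl; exact hj his
            simpa [Pi.single_eq_of_ne hij, Function.update_of_ne hij] using h'
        · intro h i hi
          rcases Finset.mem_insert.1 hi with rfl | his
          · have h' := h i hi
            simp only [Pi.single_eq_same, Function.update_self] at h' ⊢
            rw [h', sub_add_cancel]
          · have h' := h i hi
            have hij : i ≠ j := by rintro rfl; exact hj his
            simpa [Pi.single_eq_of_ne hij, Function.update_of_ne hij] using h'
      -- partition
      have hpart : bCyl s a = ⋃ v : Fin 3, bCyl (insert j s) (Function.update a j v) := by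
        ext ξ
        simp only [mem_iUnion, bCyl, mem_setOf_eq]
        constructor
        · intro h
          refine ⟨ξ j, fun i hi => ?_⟩
          rcases Finset.mem_insert.1 hi with rfl | his
          · simp
          · have hij : i ≠ j := by rintro rfl; exact hj his
            rw [Function.update_of_ne hij]; exact h i his
        · rintro ⟨v, hv⟩ i hi
          have hij : i ≠ j := by rintro rfl; exact hj hi
          have := hv i (Finset.mem_insert_of_mem hi)
          rwa [Function.update_of_ne hij] at this
      have hdisj : Pairwise (Function.onFun Disjoint
          fun v : Fin 3 => bCyl (insert j s) (Function.update a j v)) := by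
        intro v w hvw
        refine Set.disjoint_left.2 fun ξ h1 h2 => hvw ?_
        have e1 := h1 j (Finset.mem_insert_self j s)
        have e2 := h2 j (Finset.mem_insert_self j s)
        simp only [Function.update_self] at e1 e2
        rw [← e1, ← e2]
      have hsum : nuB (bCyl s a)
          = ∑ v : Fin 3, nuB (bCyl (insert j s) (Function.update a j v)) := by
        rw [hpart, measure_iUnion hdisj fun v => bCyl_meas _ _, tsum_fintype]
      have hupd : Function.update a j (a j) = a := Function.update_eq_self j a
      have hconst : ∀ v : Fin 3, nuB (bCyl (insert j s) (Function.update a j v))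
          = nuB (bCyl (insert j s) a) := by
        intro v
        rw [key v (a j), hupd]
      rw [ih] at hsum
      simp only [hconst, Finset.sum_const, Finset.card_univ, Fintype.card_fin] at hsum
      have h3 : (3 : ℕ) • nuB (bCyl (insert j s) a) = 3 * nuB (bCyl (insert j s) a) := by
        simp [nsmul_eq_mul]
      rw [h3] at hsum
      have hcard : (insert j s).card = s.card + 1 := Finset.card_insert_of_notMem hj
      rw [hcard, pow_succ]
      have h3ne : (3 : ℝ≥0∞) ≠ 0 := by norm_num
      have h3top : (3 : ℝ≥0∞) ≠ ⊤ := by norm_num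
      calc nuB (bCyl (insert j s) a)
          = 3⁻¹ * (3 * nuB (bCyl (insert j s) a)) := by
            rw [← mul_assoc, ENNReal.inv_mul_cancel h3ne h3top, one_mul]
        _ = 3⁻¹ * 3⁻¹ ^ s.card := by rw [← hsum]
        _ = 3⁻¹ ^ s.card * 3⁻¹ := by rw [mul_comm]

lemma nuB_isBernoulli : IsBernoulli (fun _ => (1:ℝ)/3) nuB := by
  refine ⟨inferInstance, fun s a => ?_⟩
  have := nuB_bCyl s a
  rw [show {ξ : Sig3 | ∀ i ∈ s, ξ i = a i} = bCyl s a from rfl, this]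
  rw [Finset.prod_const]
  rw [ENNReal.ofReal_pow (by norm_num)]
  congr 1
  rw [show ((1:ℝ)/3) = (3:ℝ)⁻¹ by norm_num]
  rw [ENNReal.ofReal_inv_of_pos (by norm_num)]
  norm_num

/-- extB -/

def extB (s : Finset ℤ) (b : ∀ _ : s, Fin 3) : ℤ → Fin 3 :=
  fun i => if h : i ∈ s then b ⟨i, h⟩ else 0

lemma cylinder_eq_biUnion (s : Finset ℤ) (S : Set (∀ _ : s, Fin 3)) :
    cylinder s S = ⋃ b ∈ S.toFinite.toFinset, bCyl s (extB s b) := by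
  classical
  ext ξ
  simp only [mem_cylinder, mem_iUnion, Set.Finite.mem_toFinset, exists_prop]
  constructor
  · intro h
    refine ⟨s.restrict ξ, h, fun i hi => ?_⟩
    simp [extB, hi, Finset.restrict]
  · rintro ⟨b, hbS, hb⟩
    have : s.restrict ξ = b := by
      funext i
      have := hb i i.2
      simpa [extB, i.2, Finset.restrict] using this
    rwa [this]

lemma meas_cylinder_eq {p : Fin 3 → ℝ} {ν : Measure Sig3} (hν : IsBernoulli p ν)
    (s : Finset ℤ) (S : Set (∀ _ : s, Fin 3)) :
    ν (cylinder s S) = ∑ b ∈ S.toFinite.toFinset,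
      ENNReal.ofReal (∏ i ∈ s, p (extB s b i)) := by
  classical
  rw [cylinder_eq_biUnion]
  rw [measure_biUnion_finset ?hd fun b _ => bCyl_meas _ _]
  · exact Finset.sum_congr rfl fun b _ => hν.2 s (extB s b)
  case hd =>
    intro b hb b' hb' hne
    refine Set.disjoint_left.2 fun ξ h1 h2 => hne ?_
    funext i
    have e1 := h1 i i.2
    have e2 := h2 i i.2
    simp only [extB, i.2, dif_pos] at e1 e2
    rw [← e1, ← e2]

lemma bernoulli_unique {p : Fin 3 → ℝ} {ν₁ ν₂ : Measure Sig3}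
    (h₁ : IsBernoulli p ν₁) (h₂ : IsBernoulli p ν₂) : ν₁ = ν₂ := by
  haveI := h₁.1
  refine ext_of_generate_finite (measurableCylinders (fun _ : ℤ => Fin 3))
    generateFrom_measurableCylinders.symm isPiSystem_measurableCylinders
    (fun u hu => ?_) ?_
  · obtain ⟨s, S, -, rfl⟩ := (mem_measurableCylinders u).1 hu
    rw [meas_cylinder_eq h₁, meas_cylinder_eq h₂]
  · haveI := h₂.1
    simp [measure_univ]

def bshift (ξ : Sig3) : Sig3 := fun i => ξ (i - 1)

lemma bshift_shift (ξ : Sig3) : bshift (shiftMap ξ) = ξ := by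
  funext i; simp [bshift, shiftMap]
lemma shift_bshift (ξ : Sig3) : shiftMap (bshift ξ) = ξ := by
  funext i; simp [bshift, shiftMap]
lemma shift_iter_bshift_iter (n : ℕ) (ξ : Sig3) : shiftMap^[n] (bshift^[n] ξ) = ξ :=
  (Function.LeftInverse.iterate shift_bshift n) ξ
lemma bshift_iter_apply (n : ℕ) (ξ : Sig3) (j : ℤ) : bshift^[n] ξ j = ξ (j - n) := by
  induction n generalizing ξ j with
  | zero => simp
  | succ n ih =>
      rw [Function.iterate_succ_apply]
      rw [ih]
      simp only [bshift]
      congr 1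
      push_cast
      ring

/-- compositions applying `η 0` first -/
def Fcomp (fs : Fin 3 → ℝ → ℝ) : ℕ → Sig3 → ℝ → ℝ
  | 0 => fun _ x => x
  | n + 1 => fun η x => Fcomp fs n (shiftMap η) (fs (η 0) x)

def Kc (cf : Fin 3 → ℝ) (n : ℕ) (η : Sig3) : ℝ := ∏ j ∈ Finset.range n, cf (η j)

def pfun (fs : Fin 3 → ℝ → ℝ) (n : ℕ) (ξ : Sig3) : ℝ := Fcomp fs n (bshift^[n] ξ) 0

def Kp (cf : Fin 3 → ℝ) (n : ℕ) (ξ : Sig3) : ℝ := Kc cf n (bshift^[n] ξ)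

section Dyn
variable {fs : Fin 3 → ℝ → ℝ} {cf : Fin 3 → ℝ}

lemma Fcomp_succ' (n : ℕ) (η : Sig3) (x : ℝ) :
    Fcomp fs (n + 1) η x = fs ((shiftMap^[n] η) 0) (Fcomp fs n η x) := by
  induction n generalizing η x with
  | zero => simp [Fcomp]
  | succ n ih =>
      show Fcomp fs (n + 1) (shiftMap η) (fs (η 0) x) = _
      rw [ih]
      rfl

lemma Fcomp_add (n k : ℕ) (η : Sig3) (x : ℝ) :
    Fcomp fs (n + k) η x = Fcomp fs n (shiftMap^[k] η) (Fcomp fs k η x) := by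
  induction k generalizing η x with
  | zero => rfl
  | succ k ih =>
      have : n + (k + 1) = (n + k) + 1 := by ring
      rw [this]
      show Fcomp fs (n + k) (shiftMap η) (fs (η 0) x) = _
      rw [ih]
      rfl

variable (hmaps : ∀ i, MapsTo (fs i) (Icc 0 1) (Icc 0 1))
variable (hlip : ∀ i, ∀ x ∈ Icc (0:ℝ) 1, ∀ y ∈ Icc (0:ℝ) 1, |fs i x - fs i y| ≤ cf i * |x - y|)
variable (hcf : ∀ i, 0 < cf i)

include hmaps in
lemma Fcomp_mem (n : ℕ) (η : Sig3) {x : ℝ} (hx : x ∈ Icc (0:ℝ) 1) :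
    Fcomp fs n η x ∈ Icc (0:ℝ) 1 := by
  induction n generalizing η x with
  | zero => exact hx
  | succ n ih => exact ih _ (hmaps _ hx)

lemma Kc_nonneg (hcf : ∀ i, 0 < cf i) (n : ℕ) (η : Sig3) : 0 ≤ Kc cf n η :=
  Finset.prod_nonneg fun j _ => (hcf _).le

include hmaps hlip hcf in
lemma Fcomp_lip (n : ℕ) (η : Sig3) {x y : ℝ} (hx : x ∈ Icc (0:ℝ) 1) (hy : y ∈ Icc (0:ℝ) 1) :
    |Fcomp fs n η x - Fcomp fs n η y| ≤ Kc cf n η * |x - y| := by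
  induction n generalizing η x y with
  | zero => simp [Fcomp, Kc]
  | succ n ih =>
      have h1 : |Fcomp fs n (shiftMap η) (fs (η 0) x) - Fcomp fs n (shiftMap η) (fs (η 0) y)|
          ≤ Kc cf n (shiftMap η) * |fs (η 0) x - fs (η 0) y| :=
        ih _ (hmaps _ hx) (hmaps _ hy)
      have h2 : |fs (η 0) x - fs (η 0) y| ≤ cf (η 0) * |x - y| := hlip _ x hx y hy
      have h3 : Kc cf n (shiftMap η) * |fs (η 0) x - fs (η 0) y|
          ≤ Kc cf n (shiftMap η) * (cf (η 0) * |x - y|) :=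
        mul_le_mul_of_nonneg_left h2 (Kc_nonneg hcf _ _)
      have hKc : Kc cf (n + 1) η = Kc cf n (shiftMap η) * cf (η 0) := by
        unfold Kc
        rw [Finset.prod_range_succ']
        rfl
      calc |Fcomp fs (n+1) η x - Fcomp fs (n+1) η y|
          = |Fcomp fs n (shiftMap η) (fs (η 0) x) - Fcomp fs n (shiftMap η) (fs (η 0) y)| := rfl
        _ ≤ Kc cf n (shiftMap η) * |fs (η 0) x - fs (η 0) y| := h1
        _ ≤ Kc cf n (shiftMap η) * (cf (η 0) * |x - y|) := h3
        _ = Kc cf (n + 1) η * |x - y| := by rw [hKc]; ring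

include hmaps in
lemma pfun_mem (n : ℕ) (ξ : Sig3) : pfun fs n ξ ∈ Icc (0:ℝ) 1 :=
  Fcomp_mem hmaps n _ (by norm_num)

lemma pfun_shift (n : ℕ) (ξ : Sig3) :
    pfun fs (n + 1) (shiftMap ξ) = fs (ξ 0) (pfun fs n ξ) := by
  unfold pfun
  rw [Function.iterate_succ_apply, bshift_shift]
  rw [Fcomp_succ', shift_iter_bshift_iter]

include hmaps hlip hcf in
lemma pfun_dist (n k : ℕ) (ξ : Sig3) :
    |pfun fs (n + k) ξ - pfun fs n ξ| ≤ Kp cf n ξ := by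
  have hsplit : bshift^[n + k] ξ = bshift^[k] (bshift^[n] ξ) := by
    rw [add_comm, Function.iterate_add_apply]
  have : pfun fs (n + k) ξ
      = Fcomp fs n (bshift^[n] ξ) (Fcomp fs k (bshift^[k] (bshift^[n] ξ)) 0) := by
    unfold pfun
    rw [hsplit, Fcomp_add, shift_iter_bshift_iter]
  rw [this]
  have hz : Fcomp fs k (bshift^[k] (bshift^[n] ξ)) 0 ∈ Icc (0:ℝ) 1 :=
    Fcomp_mem hmaps _ _ (by norm_num)
  have := Fcomp_lip hmaps hlip hcf n (bshift^[n] ξ) hz (show (0:ℝ) ∈ Icc (0:ℝ) 1 by norm_num)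
  refine this.trans ?_
  unfold Kp
  have habs : |Fcomp fs k (bshift^[k] (bshift^[n] ξ)) 0 - 0| ≤ 1 := by
    rw [sub_zero, abs_of_nonneg hz.1]; exact hz.2
  calc Kc cf n (bshift^[n] ξ) * |Fcomp fs k (bshift^[k] (bshift^[n] ξ)) 0 - 0|
      ≤ Kc cf n (bshift^[n] ξ) * 1 := mul_le_mul_of_nonneg_left habs (Kc_nonneg hcf _ _)
    _ = Kc cf n (bshift^[n] ξ) := mul_one _

include hmaps in
lemma Gmap_iter (n : ℕ) (q : XSp) :
    ((Gmap fs)^[n] q).1 = shiftMap^[n] q.1 ∧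
      (((Gmap fs)^[n] q).2 : ℝ) = Fcomp fs n q.1 (q.2 : ℝ) := by
  induction n generalizing q with
  | zero => exact ⟨rfl, rfl⟩
  | succ n ih =>
      rw [Function.iterate_succ_apply]
      have hG2 : ((Gmap fs q).2 : ℝ) = fs (q.1 0) (q.2 : ℝ) := by
        show (Set.projIcc 0 1 (by norm_num) (fs (q.1 0) (q.2 : ℝ)) : ℝ) = _
        rw [Set.projIcc_of_mem _ (hmaps _ q.2.2)]
      obtain ⟨h1, h2⟩ := ih (Gmap fs q)
      constructor
      · rw [h1]
        show shiftMap^[n] (shiftMap q.1) = _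
        rw [← Function.iterate_succ_apply]
      · rw [h2, hG2]
        rfl

end Dyn

section Meas
variable {fs : Fin 3 → ℝ → ℝ} {cf : Fin 3 → ℝ}

lemma measurable_shiftMap : Measurable shiftMap :=
  measurable_pi_lambda _ fun i => measurable_pi_apply (i + 1)

lemma measurable_bshift : Measurable bshift :=
  measurable_pi_lambda _ fun i => measurable_pi_apply (i - 1)

variable (hcont : ∀ i, Continuous (fs i))

include hcont in
lemma measurable_fs_pair : Measurable fun p : Sig3 × ℝ => fs (p.1 0) p.2 := by
  classical
  have heq : (fun p : Sig3 × ℝ => fs (p.1 0) p.2)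
      = fun p => ∑ i : Fin 3, if p.1 0 = i then fs i p.2 else 0 := by
    funext p
    rw [Finset.sum_ite_eq (Finset.univ) (p.1 0) (fun i => fs i p.2)]
    simp
  rw [heq]
  refine Finset.measurable_sum _ fun i _ => Measurable.ite ?_ ?_ measurable_const
  · have hm : Measurable fun p : Sig3 × ℝ => p.1 0 :=
      (measurable_pi_apply 0).comp measurable_fst
    exact hm (measurableSet_singleton i)
  · exact (hcont i).measurable.comp measurable_snd

include hcont in
lemma measurable_Fcomp (n : ℕ) : Measurable fun p : Sig3 × ℝ => Fcomp fs n p.1 p.2 := by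
  induction n with
  | zero => exact measurable_snd
  | succ n ih =>
      have : (fun p : Sig3 × ℝ => Fcomp fs (n+1) p.1 p.2)
          = (fun p : Sig3 × ℝ => Fcomp fs n p.1 p.2)
            ∘ (fun p : Sig3 × ℝ => (shiftMap p.1, fs (p.1 0) p.2)) := rfl
      rw [this]
      exact ih.comp ((measurable_shiftMap.comp measurable_fst).prodMk
        (measurable_fs_pair hcont))

include hcont in
lemma measurable_pfun (n : ℕ) : Measurable (pfun fs n) := by
  have : pfun fs n = (fun p : Sig3 × ℝ => Fcomp fs n p.1 p.2)
      ∘ (fun ξ => (bshift^[n] ξ, (0:ℝ))) := rfl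
  rw [this]
  exact (measurable_Fcomp hcont n).comp
    ((measurable_bshift.iterate n).prodMk measurable_const)

lemma measurable_Kp (n : ℕ) : Measurable (Kp cf n) := by
  refine Measurable.comp ?_ (measurable_bshift.iterate n)
  exact Finset.measurable_prod _ fun j _ =>
    Measurable.of_discrete.comp (measurable_pi_apply ((j:ℤ)))

include hcont in
lemma measurable_Gmap : Measurable (Gmap fs) := by
  refine (measurable_shiftMap.comp measurable_fst).prodMk ?_
  refine continuous_projIcc.measurable.comp ?_
  exact (measurable_fs_pair hcont).comp
    (measurable_fst.prodMk (measurable_subtype_coe.comp measurable_snd))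

include hcont in
lemma measurable_xfun : Measurable fun ξ => Filter.limsup (fun n => pfun fs n ξ) atTop :=
  Measurable.limsup fun n => measurable_pfun hcont n

end Meas

/-- choice of the exponent `t` -/
lemma exists_t {B γ : ℝ} (hB : 1 < B) (hγ0 : 0 < γ) (hγB : γ * B ^ 2 < 1) :
    ∃ t : ℝ, 0 < t ∧
      (2 * Real.exp (t * Real.log B) + Real.exp (t * Real.log γ)) / 3 < 1 := by
  set L := Real.log B with hL
  set l := Real.log γ with hl
  set F : ℝ → ℝ := fun t => 2 * Real.exp (t * L) + Real.exp (t * l) with hF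
  have hder : HasDerivAt F (2 * L + l) 0 := by
    have h1 : HasDerivAt (fun t : ℝ => t * L) L 0 := by
      simpa using (hasDerivAt_id (0:ℝ)).mul_const L
    have h2 : HasDerivAt (fun t : ℝ => t * l) l 0 := by
      simpa using (hasDerivAt_id (0:ℝ)).mul_const l
    have h3 : HasDerivAt (fun t : ℝ => Real.exp (t * L)) L 0 := by
      have := h1.exp
      simpa using this
    have h4 : HasDerivAt (fun t : ℝ => Real.exp (t * l)) l 0 := by
      have := h2.exp
      simpa using this
    exact (h3.const_mul 2).add h4
  have hneg : 2 * L + l < 0 := by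
    have hlog : Real.log (γ * B ^ 2) < 0 :=
      Real.log_neg (by positivity) hγB
    rw [Real.log_mul (ne_of_gt hγ0) (by positivity), Real.log_pow] at hlog
    push_cast at hlog
    linarith
  have hslope := hasDerivAt_iff_tendsto_slope.mp hder
  have hslope' : Tendsto (slope F 0) (nhdsWithin 0 (Set.Ioi 0)) (nhds (2*L+l)) :=
    hslope.mono_left (nhdsWithin_mono 0 (fun x hx => ne_of_gt hx))
  have hev : ∀ᶠ t in nhdsWithin 0 (Set.Ioi 0), slope F 0 t < 0 :=
    hslope'.eventually_lt_const hneg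
  have hpos : ∀ᶠ t in nhdsWithin (0:ℝ) (Set.Ioi 0), t ∈ Set.Ioi (0:ℝ) :=
    self_mem_nhdsWithin
  obtain ⟨t, hts, htpos⟩ := (hev.and hpos).exists
  refine ⟨t, htpos, ?_⟩
  have hF0 : F 0 = 3 := by norm_num [hF]
  rw [slope_def_field, hF0, sub_zero] at hts
  have htp : (0:ℝ) < t := htpos
  have hFt : F t < 3 := by
    by_contra h
    push_neg at h
    have : 0 ≤ (F t - 3) / t := div_nonneg (by linarith) htp.le
    linarith
  simp only [hF] at hFt
  linarith

section Moment
variable {cf : Fin 3 → ℝ}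

lemma Kp_eq_fin (n : ℕ) (ξ : Sig3) :
    Kp cf n ξ = ∏ j : Fin n, cf (ξ ((j : ℤ) - n)) := by
  unfold Kp Kc
  rw [← Fin.prod_univ_eq_prod_range (fun j => cf (bshift^[n] ξ j)) n]
  exact Finset.prod_congr rfl fun j _ => by rw [bshift_iter_apply]

/-- word cylinder over positions `-n..-1` -/
def wCyl (n : ℕ) (b : Fin n → Fin 3) : Set Sig3 :=
  {ξ | ∀ j : Fin n, ξ ((j : ℤ) - n) = b j}


lemma nuB_wCyl (n : ℕ) (b : Fin n → Fin 3) : nuB (wCyl n b) = (3 : ℝ≥0∞)⁻¹ ^ n := by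
  classical
  set s : Finset ℤ := (Finset.range n).image (fun j : ℕ => (j : ℤ) - n) with hs
  set a : ℤ → Fin 3 := fun i =>
    if h : 0 ≤ i + n ∧ i + n < n then b ⟨(i + n).toNat, by omega⟩ else 0 with ha
  have hset : wCyl n b = bCyl s a := by
    ext ξ
    constructor
    · intro hξ i hi
      simp only [hs, Finset.mem_image, Finset.mem_range] at hi
      obtain ⟨j, hj, rfl⟩ := hi
      have hξj := hξ ⟨j, hj⟩
      simp only [ha]
      rw [dif_pos (show (0:ℤ) ≤ (j:ℤ) - n + n ∧ (j:ℤ) - n + n < n by omega)]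
      have hfin : (⟨(((j:ℤ) - ↑n + ↑n)).toNat, by omega⟩ : Fin n) = ⟨j, hj⟩ := by
        apply Fin.ext; simp
      rw [hfin]
      simpa using hξj
    · intro hξ j
      have hmem : (j : ℤ) - n ∈ s := by
        simp only [hs, Finset.mem_image, Finset.mem_range]
        exact ⟨j, j.2, rfl⟩
      have h2 := hξ _ hmem
      rw [h2]
      simp only [ha]
      rw [dif_pos (show (0:ℤ) ≤ (j:ℤ) - n + n ∧ (j:ℤ) - n + n < n by
        constructor <;> omega)]
      congr 1
      apply Fin.ext
      simp
  have hcard : s.card = n := by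
    rw [hs, Finset.card_image_of_injective _ (fun x y h => by omega), Finset.card_range]
  rw [hset, nuB_bCyl, hcard]

lemma wCyl_meas (n : ℕ) (b : Fin n → Fin 3) : MeasurableSet (wCyl n b) := by
  have : wCyl n b = ⋂ j : Fin n, (fun ξ : Sig3 => ξ ((j:ℤ) - n)) ⁻¹' {b j} := by
    ext ξ; simp [wCyl]
  rw [this]
  exact MeasurableSet.iInter fun j =>
    (measurable_pi_apply _) (measurableSet_singleton _)

/-- the basic moment estimate -/
lemma nuB_Kp_ge_le (hcf : ∀ i, 0 < cf i) {t : ℝ} (ht : 0 < t) {δ : ℝ} (hδ : 0 < δ) (n : ℕ) :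
    nuB {ξ | δ ≤ Kp cf n ξ}
      ≤ ENNReal.ofReal ((Real.exp (t * Real.log δ))⁻¹
          * ((∑ v : Fin 3, Real.exp (t * Real.log (cf v))) / 3) ^ n) := by
  classical
  set wt : Fin 3 → ℝ := fun v => Real.exp (t * Real.log (cf v)) with hwt
  set Bad : Finset (Fin n → Fin 3) :=
    Finset.univ.filter (fun b => δ ≤ ∏ j : Fin n, cf (b j)) with hBad
  have hsub : {ξ | δ ≤ Kp cf n ξ} ⊆ ⋃ b ∈ Bad, wCyl n b := by
    intro ξ hξ
    simp only [mem_setOf_eq, Kp_eq_fin] at hξ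
    refine Set.mem_biUnion
      (show (fun j : Fin n => ξ ((j:ℤ) - n)) ∈ Bad from ?_) ?_
    · simp only [hBad, Finset.mem_filter, Finset.mem_univ, true_and]
      exact hξ
    · intro j; rfl
  have key : ∀ b ∈ Bad, ((3:ℝ)⁻¹) ^ n
      ≤ (Real.exp (t * Real.log δ))⁻¹ * ∏ j : Fin n, ((3:ℝ)⁻¹ * wt (b j)) := by
    intro b hb
    simp only [hBad, Finset.mem_filter] at hb
    have hδprod : δ ≤ ∏ j : Fin n, cf (b j) := hb.2
    have hlog : Real.log δ ≤ Real.log (∏ j : Fin n, cf (b j)) :=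
      Real.log_le_log hδ hδprod
    have hexp : Real.exp (t * Real.log δ)
        ≤ Real.exp (t * Real.log (∏ j : Fin n, cf (b j))) :=
      Real.exp_le_exp.2 (by nlinarith)
    have hprodexp : Real.exp (t * Real.log (∏ j : Fin n, cf (b j)))
        = ∏ j : Fin n, wt (b j) := by
      rw [Real.log_prod (fun j _ => (hcf (b j)).ne'), Finset.mul_sum, Real.exp_sum]
    have hp : (0:ℝ) < Real.exp (t * Real.log δ) := Real.exp_pos _
    have h1 : 1 ≤ (Real.exp (t * Real.log δ))⁻¹ * ∏ j : Fin n, wt (b j) := by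
      calc (1:ℝ) = (Real.exp (t * Real.log δ))⁻¹ * Real.exp (t * Real.log δ) :=
            (inv_mul_cancel₀ hp.ne').symm
        _ ≤ (Real.exp (t * Real.log δ))⁻¹ * ∏ j : Fin n, wt (b j) := by
            apply mul_le_mul_of_nonneg_left (hexp.trans_eq hprodexp) (by positivity)
    calc ((3:ℝ)⁻¹)^n = ((3:ℝ)⁻¹)^n * 1 := (mul_one _).symm
      _ ≤ ((3:ℝ)⁻¹)^n * ((Real.exp (t * Real.log δ))⁻¹ * ∏ j : Fin n, wt (b j)) :=
          mul_le_mul_of_nonneg_left h1 (by positivity)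
      _ = (Real.exp (t * Real.log δ))⁻¹ * ∏ j : Fin n, ((3:ℝ)⁻¹ * wt (b j)) := by
          rw [Finset.prod_mul_distrib, Finset.prod_const, Finset.card_univ,
            Fintype.card_fin]
          ring
  have hsumbound : ∑ _b ∈ Bad, ((3:ℝ)⁻¹) ^ n
      ≤ (Real.exp (t * Real.log δ))⁻¹ * ((∑ v : Fin 3, wt v) / 3) ^ n := by
    calc ∑ _b ∈ Bad, ((3:ℝ)⁻¹)^n
        ≤ ∑ b ∈ Bad, (Real.exp (t * Real.log δ))⁻¹ * ∏ j : Fin n, ((3:ℝ)⁻¹ * wt (b j)) :=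
          Finset.sum_le_sum key
      _ ≤ ∑ b : Fin n → Fin 3,
            (Real.exp (t * Real.log δ))⁻¹ * ∏ j : Fin n, ((3:ℝ)⁻¹ * wt (b j)) :=
          Finset.sum_le_sum_of_subset_of_nonneg (Finset.filter_subset _ _)
            (fun b _ _ => by positivity)
      _ = (Real.exp (t * Real.log δ))⁻¹
            * ∑ b : Fin n → Fin 3, ∏ j : Fin n, ((3:ℝ)⁻¹ * wt (b j)) := by
          rw [Finset.mul_sum]
      _ = (Real.exp (t * Real.log δ))⁻¹ * ((∑ v : Fin 3, wt v) / 3) ^ n := by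
          congr 1
          have hps := Finset.prod_univ_sum (κ := fun _ : Fin n => Fin 3)
            (fun _ => Finset.univ) (fun _ v => (3:ℝ)⁻¹ * wt v)
          rw [Fintype.piFinset_univ] at hps
          rw [← hps, Finset.prod_const, Finset.card_univ, Fintype.card_fin]
          congr 1
          rw [← Finset.mul_sum]
          ring
  calc nuB {ξ | δ ≤ Kp cf n ξ} ≤ nuB (⋃ b ∈ Bad, wCyl n b) := measure_mono hsub
    _ ≤ ∑ b ∈ Bad, nuB (wCyl n b) := measure_biUnion_finset_le _ _
    _ = ∑ _b ∈ Bad, ENNReal.ofReal (((3:ℝ)⁻¹) ^ n) := by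
        refine Finset.sum_congr rfl fun b _ => ?_
        rw [nuB_wCyl, ENNReal.ofReal_pow (by norm_num),
          ENNReal.ofReal_inv_of_pos (by norm_num)]
        norm_num
    _ = ENNReal.ofReal (∑ _b ∈ Bad, ((3:ℝ)⁻¹) ^ n) := by
        rw [ENNReal.ofReal_sum_of_nonneg fun b _ => by positivity]
    _ ≤ ENNReal.ofReal ((Real.exp (t * Real.log δ))⁻¹ * ((∑ v : Fin 3, wt v) / 3) ^ n) :=
        ENNReal.ofReal_le_ofReal hsumbound

end Moment

lemma exists_null_Kp_tendsto {cf : Fin 3 → ℝ} (hcf : ∀ i, 0 < cf i) {t : ℝ} (ht : 0 < t)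
    (hρ : (∑ v : Fin 3, Real.exp (t * Real.log (cf v))) / 3 < 1) :
    ∃ N : Set Sig3, MeasurableSet N ∧ nuB N = 0 ∧
      ∀ ξ ∉ N, Tendsto (fun n => Kp cf n ξ) atTop (nhds 0) := by
  set ρ : ℝ := (∑ v : Fin 3, Real.exp (t * Real.log (cf v))) / 3 with hρdef
  have hρ0 : 0 ≤ ρ := by
    rw [hρdef]
    positivity
  set S : ℕ → ℕ → Set Sig3 := fun k n => {ξ | (1:ℝ)/(k+1) ≤ Kp cf n ξ} with hS
  have hSmeas : ∀ k n, MeasurableSet (S k n) := fun k n =>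
    measurableSet_le measurable_const (measurable_Kp n)
  have hlimsup : ∀ k : ℕ, nuB (atTop.limsup (S k)) = 0 := by
    intro k
    apply measure_limsup_atTop_eq_zero
    have hδk : (0:ℝ) < 1/(k+1) := by positivity
    set C : ℝ := (Real.exp (t * Real.log (1/(k+1))))⁻¹ with hC
    have hC0 : 0 ≤ C := by positivity
    have hbound : ∀ n, nuB (S k n) ≤ ENNReal.ofReal C * (ENNReal.ofReal ρ) ^ n := by
      intro n
      refine (nuB_Kp_ge_le hcf ht hδk n).trans_eq ?_
      rw [ENNReal.ofReal_mul hC0, ENNReal.ofReal_pow hρ0]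
    have hρlt : ENNReal.ofReal ρ < 1 := by
      rw [← ENNReal.ofReal_one]
      exact ENNReal.ofReal_lt_ofReal_iff_of_nonneg hρ0 |>.2 hρ
    have hgeo : ∑' n : ℕ, ENNReal.ofReal C * (ENNReal.ofReal ρ) ^ n
        = ENNReal.ofReal C * (1 - ENNReal.ofReal ρ)⁻¹ := by
      rw [ENNReal.tsum_mul_left, ENNReal.tsum_geometric]
    have hne : ENNReal.ofReal C * (1 - ENNReal.ofReal ρ)⁻¹ ≠ ⊤ := by
      apply ENNReal.mul_ne_top ENNReal.ofReal_ne_top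
      rw [Ne, ENNReal.inv_eq_top]
      intro h
      rw [tsub_eq_zero_iff_le] at h
      exact absurd (lt_of_lt_of_le hρlt h) (lt_irrefl _)
    have hlt : ∑' n, nuB (S k n) < ⊤ := by
      calc ∑' n, nuB (S k n) ≤ ∑' n, ENNReal.ofReal C * (ENNReal.ofReal ρ) ^ n :=
            ENNReal.tsum_le_tsum hbound
        _ = ENNReal.ofReal C * (1 - ENNReal.ofReal ρ)⁻¹ := hgeo
        _ < ⊤ := hne.lt_top
    exact hlt.ne
  refine ⟨⋃ k : ℕ, atTop.limsup (S k), ?_, ?_, ?_⟩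
  · exact MeasurableSet.iUnion fun k => .measurableSet_limsup fun n => hSmeas k n
  · exact measure_iUnion_null fun k => hlimsup k
  · intro ξ hξ
    
    rw [Metric.tendsto_atTop]
    intro ε hε
    obtain ⟨k, hk⟩ := exists_nat_gt (1/ε)
    have hklt : (1:ℝ)/(k+1) < ε := by
      rw [div_lt_iff₀ (by positivity)]
      rw [div_lt_iff₀ hε] at hk
      nlinarith
    have hnot : ξ ∉ atTop.limsup (S k) := fun h => hξ (mem_iUnion.2 ⟨k, h⟩)
    rw [mem_limsup_iff_frequently_mem, not_frequently] at hnot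
    rw [eventually_atTop] at hnot
    obtain ⟨N0, hN0⟩ := hnot
    refine ⟨N0, fun n hn => ?_⟩
    have := hN0 n hn
    simp only [hS, mem_setOf_eq, not_le] at this
    have hKnn : 0 ≤ Kp cf n ξ := by
      unfold Kp Kc
      exact Finset.prod_nonneg (fun j _ => (hcf _).le)
    rw [Real.dist_eq, sub_zero, abs_of_nonneg hKnn]
    exact lt_trans this hklt


lemma nuB_shift_inv : nuB.map shiftMap = nuB := by
  refine bernoulli_unique (p := fun _ => (1:ℝ)/3) ⟨?_, ?_⟩ nuB_isBernoulli
  · haveI := nuB_isBernoulli.1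
    exact Measure.isProbabilityMeasure_map measurable_shiftMap.aemeasurable
  · intro s a
    have hpre : shiftMap ⁻¹' (bCyl s a)
        = bCyl (s.image (· + 1)) (fun i => a (i - 1)) := by
      ext ξ
      simp only [bCyl, mem_preimage, mem_setOf_eq, Finset.mem_image]
      constructor
      · rintro h i ⟨j, hj, rfl⟩
        simpa [shiftMap] using h j hj
      · intro h i hi
        have := h (i + 1) ⟨i, hi, rfl⟩
        simpa [shiftMap] using this
    have h1 := Measure.map_apply (μ := nuB) measurable_shiftMap (bCyl_meas s a)
    have h2 := nuB_isBernoulli.2 (s.image (· + 1)) (fun i => a (i - 1))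
    calc (nuB.map shiftMap) {ξ : Sig3 | ∀ i ∈ s, ξ i = a i}
        = nuB (shiftMap ⁻¹' (bCyl s a)) := h1
      _ = nuB (bCyl (s.image (· + 1)) (fun i => a (i - 1))) := by rw [hpre]
      _ = ENNReal.ofReal (∏ i ∈ s.image (· + 1), (fun _ => (1:ℝ)/3) (a (i - 1))) := h2
      _ = ENNReal.ofReal (∏ i ∈ s, (fun _ => (1:ℝ)/3) (a i)) := by
          rw [Finset.prod_const, Finset.prod_const,
            Finset.card_image_of_injective _ (add_left_injective 1)]

section Conv
variable {fs : Fin 3 → ℝ → ℝ} {cf : Fin 3 → ℝ}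
variable (hmaps : ∀ i, MapsTo (fs i) (Icc 0 1) (Icc 0 1))
variable (hlip : ∀ i, ∀ x ∈ Icc (0:ℝ) 1, ∀ y ∈ Icc (0:ℝ) 1, |fs i x - fs i y| ≤ cf i * |x - y|)
variable (hcf : ∀ i, 0 < cf i)

include hmaps hlip hcf in
lemma xfun_spec {ξ : Sig3} (hK : Tendsto (fun n => Kp cf n ξ) atTop (nhds 0)) :
    Tendsto (fun n => pfun fs n ξ) atTop
        (nhds (Filter.limsup (fun n => pfun fs n ξ) atTop)) ∧
      Filter.limsup (fun n => pfun fs n ξ) atTop ∈ Icc (0:ℝ) 1 := by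
  have hb : ∀ n m N : ℕ, N ≤ n → N ≤ m →
      dist (pfun fs n ξ) (pfun fs m ξ) ≤ 2 * Kp cf N ξ := by
    intro n m N hn hm
    have h1 : dist (pfun fs n ξ) (pfun fs N ξ) ≤ Kp cf N ξ := by
      obtain ⟨k, rfl⟩ := Nat.exists_eq_add_of_le hn
      rw [Real.dist_eq]
      exact pfun_dist hmaps hlip hcf N k ξ
    have h2 : dist (pfun fs m ξ) (pfun fs N ξ) ≤ Kp cf N ξ := by
      obtain ⟨k, rfl⟩ := Nat.exists_eq_add_of_le hm
      rw [Real.dist_eq]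
      exact pfun_dist hmaps hlip hcf N k ξ
    calc dist (pfun fs n ξ) (pfun fs m ξ)
        ≤ dist (pfun fs n ξ) (pfun fs N ξ) + dist (pfun fs N ξ) (pfun fs m ξ) :=
          dist_triangle _ _ _
      _ ≤ Kp cf N ξ + Kp cf N ξ := add_le_add h1 (dist_comm (pfun fs m ξ) _ ▸ h2)
      _ = 2 * Kp cf N ξ := by ring
  have hcauchy : CauchySeq (fun n => pfun fs n ξ) :=
    cauchySeq_of_le_tendsto_0 _ hb (by simpa using hK.const_mul 2)
  obtain ⟨L, hL⟩ := cauchySeq_tendsto_of_complete hcauchy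
  have hls : Filter.limsup (fun n => pfun fs n ξ) atTop = L := hL.limsup_eq
  rw [hls]
  refine ⟨hL, ?_, ?_⟩
  · exact ge_of_tendsto hL (Eventually.of_forall fun n => (pfun_mem hmaps n ξ).1)
  · exact le_of_tendsto hL (Eventually.of_forall fun n => (pfun_mem hmaps n ξ).2)

lemma xfun_shift {ξ : Sig3} {x : ℝ} (hcont : Continuous (fs (ξ 0)))
    (htend : Tendsto (fun n => pfun fs n ξ) atTop (nhds x)) :
    Filter.limsup (fun n => pfun fs n (shiftMap ξ)) atTop = fs (ξ 0) x := by
  have h1 : Tendsto (fun n => pfun fs (n + 1) (shiftMap ξ)) atTop (nhds (fs (ξ 0) x)) := by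
    simp_rw [pfun_shift]
    exact (hcont.tendsto x).comp htend
  have h2 : Tendsto (fun n => pfun fs n (shiftMap ξ)) atTop (nhds (fs (ξ 0) x)) :=
    (tendsto_add_atTop_iff_nat 1).1 h1
  exact h2.limsup_eq

end Conv

lemma lip_of_deriv {f : ℝ → ℝ} (hf : ContDiff ℝ 1 f) {C lb : ℝ} (hlb : 0 < lb)
    (hlow : ∀ x ∈ Icc (0:ℝ) 1, lb ≤ deriv f x) (hC : ∀ x ∈ Icc (0:ℝ) 1, deriv f x ≤ C) :
    ∀ x ∈ Icc (0:ℝ) 1, ∀ y ∈ Icc (0:ℝ) 1, |f x - f y| ≤ C * |x - y| := by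
  intro x hx y hy
  have := Convex.norm_image_sub_le_of_norm_deriv_le
    (fun z _ => (hf.differentiable one_ne_zero) z)
    (fun z hz => by
      rw [Real.norm_eq_abs, abs_of_pos (lt_of_lt_of_le hlb (hlow z hz))]
      exact hC z hz)
    (convex_Icc 0 1) hy hx
  simpa [Real.norm_eq_abs] using this

lemma bshift_iter_shift_iter (n : ℕ) (ξ : Sig3) : bshift^[n] (shiftMap^[n] ξ) = ξ :=
  (Function.LeftInverse.iterate bshift_shift n) ξ


/-- if `γ·(β⁺)² < 1` then the invariant lift of the `(1/3,1/3,1/3)`-Bernoulli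
measure is unique and has negative central exponent. -/
theorem stmt16 (f₀ f₁ f₂ : ℝ → ℝ) (β₀ lam₀ γ β₂ : ℝ)
    (h0 : F0cond f₀ β₀ lam₀) (h1 : F1cond f₁ γ lam₀) (h2 : F2cond f₂ β₂ lam₀)
    (hd : ∀ x ∈ Set.Icc (0:ℝ) 1, deriv f₀ x ≤ max β₀ β₂ ∧ deriv f₂ x ≤ max β₀ β₂)
    (hγ : γ * (max β₀ β₂) ^ 2 < 1) :
    ∃ μ : Measure XSp,
      (IsProbabilityMeasure μ ∧ μ.map (Gmap ![f₀, f₁, f₂]) = μ ∧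
        IsBernoulli (fun _ => (1:ℝ)/3) (μ.map Prod.fst)) ∧
      chiOf ![f₀, f₁, f₂] μ < 0 ∧
      ∀ μ' : Measure XSp,
        (IsProbabilityMeasure μ' ∧ μ'.map (Gmap ![f₀, f₁, f₂]) = μ' ∧
          IsBernoulli (fun _ => (1:ℝ)/3) (μ'.map Prod.fst)) → μ' = μ := by
  classical
  obtain ⟨hc0, hm0, -, -, -, -, -, hβ0, -, hl0pos, -, hd0low⟩ := h0
  obtain ⟨hf1, hγlam, hγ1⟩ := h1
  obtain ⟨hc2, hm2, -, -, -, hβ2, hd2low, -⟩ := h2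
  set B : ℝ := max β₀ β₂ with hBdef
  have hB : 1 < B := lt_of_lt_of_le hβ0 (le_max_left _ _)
  have hγpos : 0 < γ := lt_of_lt_of_le hl0pos hγlam
  set fs3 : Fin 3 → ℝ → ℝ := ![f₀, f₁, f₂] with hfs3
  set cf : Fin 3 → ℝ := ![B, γ, B] with hcfdef
  have hcf0 : cf 0 = B := rfl
  have hcf1 : cf 1 = γ := rfl
  have hcf2 : cf 2 = B := rfl
  have hfs0 : fs3 0 = f₀ := rfl
  have hfs1 : fs3 1 = f₁ := rfl
  have hfs2 : fs3 2 = f₂ := rfl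
  have hcf : ∀ i, 0 < cf i := by
    intro i
    match i with
    | 0 => rw [hcf0]; linarith
    | 1 => rw [hcf1]; exact hγpos
    | 2 => rw [hcf2]; linarith
  have hmaps : ∀ i, MapsTo (fs3 i) (Icc 0 1) (Icc 0 1) := by
    intro i
    match i with
    | 0 => rw [hfs0]; exact hm0
    | 1 =>
      rw [hfs1]
      intro x hx
      rw [hf1 x]
      constructor
      · have : (0:ℝ) ≤ 1 - x := by linarith [hx.2]
        positivity
      · nlinarith [hx.1, hx.2]
    | 2 => rw [hfs2]; exact hm2
  have hcont : ∀ i, Continuous (fs3 i) := by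
    intro i
    match i with
    | 0 => rw [hfs0]; exact hc0.continuous
    | 1 =>
      rw [hfs1]
      have : f₁ = fun x => γ * (1 - x) := funext hf1
      rw [this]
      exact continuous_const.mul (continuous_const.sub continuous_id)
    | 2 => rw [hfs2]; exact hc2.continuous
  have hlip : ∀ i, ∀ x ∈ Icc (0:ℝ) 1, ∀ y ∈ Icc (0:ℝ) 1,
      |fs3 i x - fs3 i y| ≤ cf i * |x - y| := by
    intro i
    match i with
    | 0 =>
      rw [hfs0, hcf0]
      exact lip_of_deriv hc0 hl0pos hd0low (fun x hx => (hd x hx).1)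
    | 1 =>
      rw [hfs1, hcf1]
      intro x _ y _
      rw [hf1 x, hf1 y]
      have hrw : γ * (1 - x) - γ * (1 - y) = γ * (y - x) := by ring
      rw [hrw, abs_mul, abs_of_pos hγpos, abs_sub_comm]
    | 2 =>
      rw [hfs2, hcf2]
      exact lip_of_deriv hc2 hl0pos hd2low (fun x hx => (hd x hx).2)
  -- choice of the exponent t
  obtain ⟨t, ht, hρ'⟩ := exists_t hB hγpos hγ
  have hρ : (∑ v : Fin 3, Real.exp (t * Real.log (cf v))) / 3 < 1 := by
    have hsum : ∑ v : Fin 3, Real.exp (t * Real.log (cf v))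
        = 2 * Real.exp (t * Real.log B) + Real.exp (t * Real.log γ) := by
      rw [Fin.sum_univ_three, hcf0, hcf1, hcf2]
      ring
    rw [hsum]
    exact hρ'
  obtain ⟨N, hNmeas, hNnull, hNtend⟩ := exists_null_Kp_tendsto hcf ht hρ
  -- the invariant graph
  set xfun : Sig3 → ℝ := fun ξ => Filter.limsup (fun n => pfun fs3 n ξ) atTop with hxfun
  have hxmeas : Measurable xfun := measurable_xfun hcont
  set Φ : Sig3 → XSp :=
    fun ξ => (ξ, Set.projIcc (0:ℝ) 1 (by norm_num) (xfun ξ)) with hΦdef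
  have hΦmeas : Measurable Φ :=
    measurable_id.prodMk (continuous_projIcc.measurable.comp hxmeas)
  set μ : Measure XSp := nuB.map Φ with hμdef
  have hgood : ∀ ξ ∉ N, Tendsto (fun n => pfun fs3 n ξ) atTop (nhds (xfun ξ))
      ∧ xfun ξ ∈ Icc (0:ℝ) 1 :=
    fun ξ hξ => xfun_spec hmaps hlip hcf (hNtend ξ hξ)
  have hstep : ∀ ξ ∉ N, xfun (shiftMap ξ) = fs3 (ξ 0) (xfun ξ) :=
    fun ξ hξ => xfun_shift (hcont (ξ 0)) (hgood ξ hξ).1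
  have hΦeq : ∀ ξ ∉ N, Gmap fs3 (Φ ξ) = Φ (shiftMap ξ) := by
    intro ξ hξ
    have hmem := (hgood ξ hξ).2
    have hval : ((Set.projIcc (0:ℝ) 1 (by norm_num) (xfun ξ)) : ℝ) = xfun ξ := by
      rw [Set.projIcc_of_mem _ hmem]
    show (shiftMap ξ, Set.projIcc (0:ℝ) 1 (by norm_num)
        (fs3 (ξ 0) ((Set.projIcc (0:ℝ) 1 (by norm_num) (xfun ξ)) : ℝ)))
      = (shiftMap ξ, Set.projIcc (0:ℝ) 1 (by norm_num) (xfun (shiftMap ξ)))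
    rw [hval, ← hstep ξ hξ]
  have hGm : Measurable (Gmap fs3) := measurable_Gmap hcont
  haveI hProb : IsProbabilityMeasure μ := Measure.isProbabilityMeasure_map hΦmeas.aemeasurable
  have hinv : μ.map (Gmap fs3) = μ := by
    rw [hμdef, Measure.map_map hGm hΦmeas]
    have hae : (Gmap fs3 ∘ Φ) =ᵐ[nuB] (Φ ∘ shiftMap) := by
      rw [Filter.EventuallyEq, ae_iff]
      refine measure_mono_null (fun ξ hξ => ?_) hNnull
      by_contra hc
      exact hξ (hΦeq ξ hc)
    rw [Measure.map_congr hae, ← Measure.map_map hΦmeas measurable_shiftMap, nuB_shift_inv]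
  have hmarg : μ.map Prod.fst = nuB := by
    rw [hμdef, Measure.map_map measurable_fst hΦmeas]
    have : (Prod.fst ∘ Φ) = id := rfl
    rw [this, Measure.map_id]
  refine ⟨μ, ⟨hProb, hinv, by rw [hmarg]; exact nuB_isBernoulli⟩, ?_, ?_⟩
  · -- negative central exponent
    set g : Fin 3 → ℝ := fun i => Real.log (cf i) with hgdef
    have hg0 : g 0 = Real.log B := rfl
    have hg1 : g 1 = Real.log γ := rfl
    have hg2 : g 2 = Real.log B := rfl
    have hderiv1 : ∀ x : ℝ, deriv f₁ x = -γ := by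
      intro x
      have hf1' : f₁ = fun x => γ * (1 - x) := funext hf1
      have hda : HasDerivAt f₁ (γ * (0 - 1)) x := by
        rw [hf1']
        exact ((hasDerivAt_const x (1:ℝ)).sub (hasDerivAt_id x)).const_mul γ
      rw [hda.deriv]
      ring
    have hrange : ∀ q : XSp, phiC fs3 q ∈ Icc (Real.log lam₀) (Real.log B) := by
      rintro ⟨ξ, x⟩
      have hx := x.2
      show Real.log |deriv (fs3 (ξ 0)) (x:ℝ)| ∈ Icc (Real.log lam₀) (Real.log B)
      have key : ∀ i, Real.log |deriv (fs3 i) (x:ℝ)| ∈ Icc (Real.log lam₀) (Real.log B) := by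
        intro i
        match i with
        | 0 =>
          rw [hfs0]
          have hlow := hd0low _ hx
          have hup := (hd _ hx).1
          rw [abs_of_pos (lt_of_lt_of_le hl0pos hlow)]
          exact ⟨Real.log_le_log hl0pos hlow, Real.log_le_log (by linarith) hup⟩
        | 1 =>
          rw [hfs1, hderiv1, abs_neg, abs_of_pos hγpos]
          exact ⟨Real.log_le_log hl0pos hγlam,
            Real.log_le_log hγpos (by linarith)⟩
        | 2 =>
          rw [hfs2]
          have hlow := hd2low _ hx
          have hup := (hd _ hx).2
          rw [abs_of_pos (lt_of_lt_of_le hl0pos hlow)]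
          exact ⟨Real.log_le_log hl0pos hlow, Real.log_le_log (by linarith) hup⟩
      exact key (ξ 0)
    have hφle : ∀ q : XSp, phiC fs3 q ≤ g (q.1 0) := by
      rintro ⟨ξ, x⟩
      have hx := x.2
      show Real.log |deriv (fs3 (ξ 0)) (x:ℝ)| ≤ g (ξ 0)
      have key : ∀ i, Real.log |deriv (fs3 i) (x:ℝ)| ≤ g i := by
        intro i
        match i with
        | 0 =>
          rw [hfs0, hg0]
          have hlow := hd0low _ hx
          rw [abs_of_pos (lt_of_lt_of_le hl0pos hlow)]
          exact Real.log_le_log (lt_of_lt_of_le hl0pos hlow) (hd _ hx).1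
        | 1 =>
          rw [hfs1, hg1, hderiv1, abs_neg, abs_of_pos hγpos]
        | 2 =>
          rw [hfs2, hg2]
          have hlow := hd2low _ hx
          rw [abs_of_pos (lt_of_lt_of_le hl0pos hlow)]
          exact Real.log_le_log (lt_of_lt_of_le hl0pos hlow) (hd _ hx).2
      exact key (ξ 0)
    have hφmeas : Measurable (phiC fs3) := by
      have heq : phiC fs3 = fun q : XSp =>
          ∑ i : Fin 3, if q.1 0 = i then Real.log |deriv (fs3 i) (q.2:ℝ)| else 0 := by
        funext q
        rw [Finset.sum_ite_eq Finset.univ (q.1 0)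
          (fun i => Real.log |deriv (fs3 i) (q.2:ℝ)|)]
        simp [phiC]
      rw [heq]
      refine Finset.measurable_sum _ fun i _ => Measurable.ite ?_ ?_ measurable_const
      · have hm : Measurable fun q : XSp => q.1 0 :=
          (measurable_pi_apply 0).comp measurable_fst
        exact hm (measurableSet_singleton i)
      · exact (Real.measurable_log.comp (measurable_deriv (fs3 i)).abs).comp
          (measurable_subtype_coe.comp measurable_snd)
    have hCb : ∀ q : XSp, ‖phiC fs3 q‖ ≤ |Real.log lam₀| + |Real.log B| := by
      intro q
      obtain ⟨hl, hu⟩ := hrange q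
      rw [Real.norm_eq_abs]
      rw [abs_le]
      constructor
      · have := neg_abs_le (Real.log lam₀)
        have := abs_nonneg (Real.log B)
        linarith
      · have := le_abs_self (Real.log B)
        have := abs_nonneg (Real.log lam₀)
        linarith
    have hφint : Integrable (phiC fs3) μ :=
      Integrable.mono' (integrable_const _) hφmeas.aestronglyMeasurable
        (ae_of_all _ hCb)
    have hgmeas : Measurable fun q : XSp => g (q.1 0) := by
      have : (fun q : XSp => g (q.1 0)) = g ∘ ((fun ξ : Sig3 => ξ 0) ∘ Prod.fst) := rfl
      rw [this]
      exact Measurable.of_discrete.comp ((measurable_pi_apply 0).comp measurable_fst)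
    have hgb : ∀ i, ‖g i‖ ≤ |g 0| + |g 1| + |g 2| := by
      intro i
      have h0 := abs_nonneg (g 0)
      have h1 := abs_nonneg (g 1)
      have h2 := abs_nonneg (g 2)
      match i with
      | 0 => rw [Real.norm_eq_abs]; linarith
      | 1 => rw [Real.norm_eq_abs]; linarith
      | 2 => rw [Real.norm_eq_abs]; linarith
    have hgint : Integrable (fun q : XSp => g (q.1 0)) μ :=
      Integrable.mono' (integrable_const _) hgmeas.aestronglyMeasurable
        (ae_of_all _ fun q => hgb (q.1 0))
    have hmono : chiOf fs3 μ ≤ ∫ q, g (q.1 0) ∂μ :=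
      integral_mono hφint hgint hφle
    -- compute the integral of the simple function
    set A : Fin 3 → Set XSp := fun i => {q | q.1 0 = i} with hAdef
    have hAmeas : ∀ i, MeasurableSet (A i) := by
      intro i
      have hm : Measurable fun q : XSp => q.1 0 :=
        (measurable_pi_apply 0).comp measurable_fst
      exact hm (measurableSet_singleton i)
    have hμA : ∀ i, μ (A i) = ENNReal.ofReal ((1:ℝ)/3) := by
      intro i
      have hset : A i = Prod.fst ⁻¹' {ξ : Sig3 | ξ 0 = i} := rfl
      have h1 : μ (A i) = (μ.map Prod.fst) {ξ : Sig3 | ξ 0 = i} := by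
        rw [Measure.map_apply measurable_fst]
        · rw [hset]
        · have : {ξ : Sig3 | ξ 0 = i} = (fun ξ : Sig3 => ξ 0) ⁻¹' {i} := rfl
          rw [this]
          exact (measurable_pi_apply 0) (measurableSet_singleton i)
      rw [h1, hmarg]
      have hcyl : {ξ : Sig3 | ξ 0 = i} = {ξ : Sig3 | ∀ j ∈ ({0} : Finset ℤ), ξ j = i} := by
        ext ξ
        simp
      rw [hcyl]
      have := nuB_isBernoulli.2 ({0} : Finset ℤ) (fun _ => i)
      rw [this]
      simp
    have hIg : ∫ q, g (q.1 0) ∂μ = ∑ i : Fin 3, g i * (1/3) := by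
      have hfun : (fun q : XSp => g (q.1 0))
          = fun q => ∑ i : Fin 3, (A i).indicator (fun _ => g i) q := by
        funext q
        have : ∀ i : Fin 3, (A i).indicator (fun _ => g i) q
            = if q.1 0 = i then g i else 0 := by
          intro i
          rw [Set.indicator_apply]
          rfl
        simp_rw [this]
        rw [Finset.sum_ite_eq Finset.univ (q.1 0) g]
        simp
      rw [hfun, integral_finset_sum]
      · refine Finset.sum_congr rfl fun i _ => ?_
        rw [integral_indicator_const (g i) (hAmeas i), measureReal_def, hμA i]
        rw [ENNReal.toReal_ofReal (by norm_num)]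
        rw [smul_eq_mul, mul_comm]
      · intro i _
        exact (integrable_const (g i)).indicator (hAmeas i)
    have hneg : Real.log γ + 2 * Real.log B < 0 := by
      have hpos : (0:ℝ) < γ * B ^ 2 := by positivity
      have := Real.log_neg hpos hγ
      rw [Real.log_mul hγpos.ne' (by positivity), Real.log_pow] at this
      push_cast at this
      linarith
    have hfin : ∑ i : Fin 3, g i * (1/3) < 0 := by
      rw [Fin.sum_univ_three, hg0, hg1, hg2]
      linarith
    calc chiOf fs3 μ ≤ ∫ q, g (q.1 0) ∂μ := hmono
      _ = ∑ i : Fin 3, g i * (1/3) := hIg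
      _ < 0 := hfin
  · -- uniqueness
    rintro μ' ⟨hP', hinv', hber'⟩
    haveI := hP'
    have hmar' : μ'.map Prod.fst = nuB := bernoulli_unique hber' nuB_isBernoulli
    have hiter : ∀ n, μ'.map ((Gmap fs3)^[n]) = μ' := by
      intro n
      induction n with
      | zero => simpa using Measure.map_id
      | succ n ih =>
          rw [Function.iterate_succ, ← Measure.map_map (hGm.iterate n) hGm, hinv', ih]
    set S : ℕ → Set XSp :=
      fun n => {q | |(q.2:ℝ) - pfun fs3 n q.1| ≤ Kp cf n q.1} with hSdef
    have hSmeas : ∀ n, MeasurableSet (S n) := by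
      intro n
      apply measurableSet_le
      · exact ((measurable_subtype_coe.comp measurable_snd).sub
          ((measurable_pfun hcont n).comp measurable_fst)).abs
      · exact (measurable_Kp n).comp measurable_fst
    have hSfull : ∀ n, μ' (S n) = 1 := by
      intro n
      have hpre : (Gmap fs3)^[n] ⁻¹' (S n) = univ := by
        rw [eq_univ_iff_forall]
        intro q
        have hq := Gmap_iter hmaps n q
        show |((((Gmap fs3)^[n]) q).2 : ℝ) - pfun fs3 n (((Gmap fs3)^[n]) q).1|
          ≤ Kp cf n (((Gmap fs3)^[n]) q).1
        rw [hq.1, hq.2]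
        unfold pfun Kp
        rw [bshift_iter_shift_iter]
        have hlipn := Fcomp_lip hmaps hlip hcf n q.1 q.2.2
          (show (0:ℝ) ∈ Icc (0:ℝ) 1 by norm_num)
        refine hlipn.trans ?_
        have habs : |(q.2:ℝ) - 0| ≤ 1 := by
          rw [sub_zero, abs_of_nonneg q.2.2.1]
          exact q.2.2.2
        calc Kc cf n q.1 * |(q.2:ℝ) - 0| ≤ Kc cf n q.1 * 1 :=
              mul_le_mul_of_nonneg_left habs (Kc_nonneg hcf _ _)
          _ = Kc cf n q.1 := mul_one _
      have hmap := Measure.map_apply (μ := μ') (hGm.iterate n) (hSmeas n)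
      rw [hiter n] at hmap
      rw [hmap, hpre, measure_univ]
    set T : Set XSp := (⋂ n, S n) ∩ (Prod.fst ⁻¹' Nᶜ) with hTdef
    have hTmeas : MeasurableSet T :=
      (MeasurableSet.iInter fun n => hSmeas n).inter
        (measurable_fst hNmeas.compl)
    have hTfull : μ' Tᶜ = 0 := by
      rw [hTdef, compl_inter]
      refine measure_union_null ?_ ?_
      · rw [compl_iInter]
        refine measure_iUnion_null fun n => ?_
        rw [measure_compl (hSmeas n) (measure_ne_top μ' _), hSfull n, measure_univ]
        simp
      · have hmapN := Measure.map_apply (μ := μ') measurable_fst hNmeas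
        rw [hmar'] at hmapN
        have hNc : (Prod.fst ⁻¹' Nᶜ : Set XSp)ᶜ = Prod.fst ⁻¹' N := by
          rw [preimage_compl, compl_compl]
        rw [hNc, ← hmapN, hNnull]
    have hgraph : ∀ q ∈ T, Φ q.1 = q := by
      intro q hq
      obtain ⟨hq1, hq2⟩ := hq
      rw [mem_preimage, mem_compl_iff] at hq2
      have hKt := hNtend q.1 hq2
      have htend := (hgood q.1 hq2).1
      have hsq : Tendsto (fun n => pfun fs3 n q.1) atTop (nhds (q.2:ℝ)) := by
        have hdist : ∀ n, ‖pfun fs3 n q.1 - (q.2:ℝ)‖ ≤ Kp cf n q.1 := by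
          intro n
          have hmemS := mem_iInter.1 hq1 n
          rw [Real.norm_eq_abs, abs_sub_comm]
          exact hmemS
        have h0 : Tendsto (fun n => pfun fs3 n q.1 - (q.2:ℝ)) atTop (nhds 0) :=
          squeeze_zero_norm hdist hKt
        have := h0.add_const ((q.2:ℝ))
        simpa using this
      have hxq : xfun q.1 = (q.2:ℝ) := tendsto_nhds_unique htend hsq
      show (q.1, Set.projIcc (0:ℝ) 1 (by norm_num) (xfun q.1)) = q
      rw [hxq]
      rw [Set.projIcc_val (by norm_num : (0:ℝ) < 1).le q.2]
    have hfull : ∀ B' : Set XSp, μ' (B' ∩ T) = μ' B' := by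
      intro B'
      refine le_antisymm (measure_mono inter_subset_left) ?_
      calc μ' B' = μ' ((B' ∩ T) ∪ (B' \ T)) := by rw [inter_union_diff]
        _ ≤ μ' (B' ∩ T) + μ' (B' \ T) := measure_union_le _ _
        _ ≤ μ' (B' ∩ T) + μ' Tᶜ :=
            add_le_add le_rfl (measure_mono (diff_subset_compl _ _))
        _ = μ' (B' ∩ T) := by rw [hTfull, add_zero]
    refine Measure.ext fun A hA => ?_
    have hset2 : A ∩ T = (Prod.fst ⁻¹' (Φ ⁻¹' A)) ∩ T := by
      ext q
      simp only [mem_inter_iff, mem_preimage]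
      constructor
      · rintro ⟨hqA, hqT⟩
        refine ⟨?_, hqT⟩
        rw [hgraph q hqT]
        exact hqA
      · rintro ⟨hqA, hqT⟩
        refine ⟨?_, hqT⟩
        rw [← hgraph q hqT]
        exact hqA
    have hμ'A : μ' A = μ' (Prod.fst ⁻¹' (Φ ⁻¹' A)) := by
      rw [← hfull A, hset2, hfull]
    have hmapA := Measure.map_apply (μ := μ') measurable_fst (hΦmeas hA)
    rw [hmar'] at hmapA
    rw [hμ'A, ← hmapA]
    rw [hμdef, Measure.map_apply hΦmeas hA]


end
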